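/- Let Ω ⊂ ℝ^d be a bounded open set with positive Lebesgue measure. Then the set of finite linear combinations of isotropic Gaussian primitives, i.e. functions of the form x ↦ Σ_{k=1}^K c_k exp(−‖x−μ_k‖²/(2σ_k²)) with K ∈ ℕ, c_k ∈ ℝ, μ_k ∈ ℝ^d and σ_k > 0, restricted to Ω, is dense in L²(Ω) with respect to Lebesgue measure. -/

import Mathlib

open MeasureTheory

noncomputable section GaussAux

variable {d : ℕ}

local notation "E" => EuclideanSpace ℝ (Fin d)

/-- product of two isotropic Gaussians is a scalar multiple of an isotropic Gaussian -/
lemma gauss_mul_gauss (μ ν : E) {σ τ : ℝ} (hσ : 0 < σ) (hτ : 0 < τ) :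
    ∃ (C : ℝ) (ρ : E) (s : ℝ), 0 < s ∧ ∀ x : E,
      Real.exp (-‖x - μ‖ ^ 2 / (2 * σ ^ 2)) * Real.exp (-‖x - ν‖ ^ 2 / (2 * τ ^ 2))
        = C * Real.exp (-‖x - ρ‖ ^ 2 / (2 * s ^ 2)) := by
  have hσ2 : (0:ℝ) < σ ^ 2 := by positivity
  have hτ2 : (0:ℝ) < τ ^ 2 := by positivity
  have hst : (0:ℝ) < σ ^ 2 + τ ^ 2 := by positivity
  set a : ℝ := τ ^ 2 / (σ ^ 2 + τ ^ 2) with ha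
  set b : ℝ := σ ^ 2 / (σ ^ 2 + τ ^ 2) with hb
  refine ⟨Real.exp (-‖μ - ν‖ ^ 2 / (2 * (σ ^ 2 + τ ^ 2))), a • μ + b • ν,
    σ * τ / Real.sqrt (σ ^ 2 + τ ^ 2), by positivity, fun x => ?_⟩
  rw [← Real.exp_add, ← Real.exp_add]
  congr 1
  have hs2 : (σ * τ / Real.sqrt (σ ^ 2 + τ ^ 2)) ^ 2 = σ ^ 2 * τ ^ 2 / (σ ^ 2 + τ ^ 2) := by
    rw [div_pow, Real.sq_sqrt hst.le]; ring
  rw [hs2]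
  have e1 : ‖x - μ‖ ^ 2 = ‖x‖ ^ 2 - 2 * inner ℝ x μ + ‖μ‖ ^ 2 := norm_sub_sq_real x μ
  have e2 : ‖x - ν‖ ^ 2 = ‖x‖ ^ 2 - 2 * inner ℝ x ν + ‖ν‖ ^ 2 := norm_sub_sq_real x ν
  have e3 : ‖μ - ν‖ ^ 2 = ‖μ‖ ^ 2 - 2 * inner ℝ μ ν + ‖ν‖ ^ 2 := norm_sub_sq_real μ ν
  have e4 : ‖x - (a • μ + b • ν)‖ ^ 2
      = ‖x‖ ^ 2 - 2 * (a * inner ℝ x μ + b * inner ℝ x ν)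
        + (a ^ 2 * ‖μ‖ ^ 2 + 2 * (a * b * inner ℝ μ ν) + b ^ 2 * ‖ν‖ ^ 2) := by
    rw [norm_sub_sq_real]
    congr 1
    · congr 2
      rw [inner_add_right, real_inner_smul_right, real_inner_smul_right]
    · rw [norm_add_sq_real, real_inner_smul_left, real_inner_smul_right,
        norm_smul, norm_smul, mul_pow, mul_pow, Real.norm_eq_abs, Real.norm_eq_abs,
        sq_abs, sq_abs]
      ring
  rw [e1, e2, e3, e4, ha, hb]
  field_simp
  ring


def IsCombo {d : ℕ} (f : EuclideanSpace ℝ (Fin d) → ℝ) : Prop :=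
  ∃ (K : ℕ) (c : Fin K → ℝ) (μ : Fin K → EuclideanSpace ℝ (Fin d)) (σ : Fin K → ℝ),
    (∀ k, 0 < σ k) ∧
    f = fun x => ∑ k, c k * Real.exp (-‖x - μ k‖ ^ 2 / (2 * σ k ^ 2))

lemma IsCombo.add {f g : E → ℝ} (hf : IsCombo f) (hg : IsCombo g) :
    IsCombo (fun x => f x + g x) := by
  obtain ⟨K1, c1, μ1, σ1, h1, rfl⟩ := hf
  obtain ⟨K2, c2, μ2, σ2, h2, rfl⟩ := hg
  refine ⟨K1 + K2, Fin.append c1 c2, Fin.append μ1 μ2, Fin.append σ1 σ2, ?_, ?_⟩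
  · intro k
    refine Fin.addCases (fun i => ?_) (fun i => ?_) k
    · simpa using h1 i
    · simpa using h2 i
  · funext x
    rw [Fin.sum_univ_add]
    simp

lemma IsCombo.smul (r : ℝ) {f : E → ℝ} (hf : IsCombo f) : IsCombo (fun x => r * f x) := by
  obtain ⟨K, c, μ, σ, h, rfl⟩ := hf
  exact ⟨K, fun k => r * c k, μ, σ, h, by funext x; rw [Finset.mul_sum]; simp [mul_assoc]⟩

lemma IsCombo.mul {f g : E → ℝ} (hf : IsCombo f) (hg : IsCombo g) :
    IsCombo (fun x => f x * g x) := by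
  obtain ⟨K1, c1, μ1, σ1, h1, rfl⟩ := hf
  obtain ⟨K2, c2, μ2, σ2, h2, rfl⟩ := hg
  choose C ρ s hs hEq using fun (k : Fin K1) (l : Fin K2) =>
    gauss_mul_gauss (μ1 k) (μ2 l) (h1 k) (h2 l)
  refine ⟨K1 * K2,
    fun i => c1 (finProdFinEquiv.symm i).1 * c2 (finProdFinEquiv.symm i).2
      * C (finProdFinEquiv.symm i).1 (finProdFinEquiv.symm i).2,
    fun i => ρ (finProdFinEquiv.symm i).1 (finProdFinEquiv.symm i).2,
    fun i => s (finProdFinEquiv.symm i).1 (finProdFinEquiv.symm i).2,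
    fun i => hs _ _, ?_⟩
  funext x
  rw [Finset.sum_mul_sum]
  rw [← finProdFinEquiv.sum_comp (M := ℝ)]
  rw [Fintype.sum_prod_type]
  refine Finset.sum_congr rfl fun k _ => Finset.sum_congr rfl fun l _ => ?_
  simp only [Equiv.symm_apply_apply]
  rw [mul_mul_mul_comm, hEq k l x]
  ring

lemma IsCombo.gauss (μ : E) {σ : ℝ} (hσ : 0 < σ) :
    IsCombo (fun x : E => Real.exp (-‖x - μ‖ ^ 2 / (2 * σ ^ 2))) :=
  ⟨1, fun _ => 1, fun _ => μ, fun _ => σ, fun _ => hσ, by funext x; simp⟩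

lemma IsCombo.continuous {f : E → ℝ} (hf : IsCombo f) : Continuous f := by
  obtain ⟨K, c, μ, σ, h, rfl⟩ := hf
  exact continuous_finset_sum _ fun k _ => by fun_prop

lemma IsCombo.bound {f : E → ℝ} (hf : IsCombo f) : ∃ M : ℝ, ∀ x, |f x| ≤ M := by
  obtain ⟨K, c, μ, σ, h, rfl⟩ := hf
  refine ⟨∑ k, |c k|, fun x => ?_⟩
  refine (Finset.abs_sum_le_sum_abs _ _).trans (Finset.sum_le_sum fun k _ => ?_)
  rw [abs_mul]
  have h1 : Real.exp (-‖x - μ k‖ ^ 2 / (2 * σ k ^ 2)) ≤ 1 := by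
    rw [show (1:ℝ) = Real.exp 0 from (Real.exp_zero).symm, Real.exp_le_exp]
    exact div_nonpos_of_nonpos_of_nonneg (neg_nonpos.mpr (by positivity)) (by positivity)
  rw [abs_of_pos (Real.exp_pos _)]
  nlinarith [abs_nonneg (c k), Real.exp_pos (-‖x - μ k‖ ^ 2 / (2 * σ k ^ 2))]

/-- constants are approximable by combos on a bounded set -/
lemma isCombo_const_approx {T : Set E} (hT : Bornology.IsBounded T) (r : ℝ) {δ : ℝ} (hδ : 0 < δ) :
    ∃ h : E → ℝ, IsCombo h ∧ ∀ x ∈ T, |h x - r| ≤ δ := by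
  obtain ⟨R, hR⟩ := hT.subset_closedBall 0
  set σ : ℝ := Real.sqrt ((|r| * R ^ 2) / (2 * δ) + 1) with hσdef
  have hσ2 : σ ^ 2 = (|r| * R ^ 2) / (2 * δ) + 1 := by
    rw [hσdef, Real.sq_sqrt]; positivity
  have hσpos : 0 < σ := Real.sqrt_pos.mpr (by positivity)
  refine ⟨fun x => r * Real.exp (-‖x - 0‖ ^ 2 / (2 * σ ^ 2)),
    (IsCombo.gauss (0 : E) hσpos).smul r, fun x hx => ?_⟩
  have hxR : ‖x - 0‖ ≤ R := by simpa [dist_eq_norm] using hR hx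
  have ht0 : 0 ≤ ‖x - 0‖ ^ 2 / (2 * σ ^ 2) := by positivity
  set t := ‖x - 0‖ ^ 2 / (2 * σ ^ 2) with htdef
  have hrw : -‖x - 0‖ ^ 2 / (2 * σ ^ 2) = -t := by rw [htdef, neg_div]
  show |r * Real.exp (-‖x - 0‖ ^ 2 / (2 * σ ^ 2)) - r| ≤ δ
  rw [hrw]
  have hexp1 : Real.exp (-t) ≤ 1 := by
    rw [show (1:ℝ) = Real.exp 0 from (Real.exp_zero).symm, Real.exp_le_exp]
    linarith
  have hexp2 : 1 - t ≤ Real.exp (-t) := by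
    have := Real.add_one_le_exp (-t); linarith
  have hsq : ‖x - 0‖ ^ 2 ≤ R ^ 2 := by
    have hR0 : (0:ℝ) ≤ R := le_trans (norm_nonneg _) hxR
    exact pow_le_pow_left₀ (norm_nonneg _) hxR 2
  have htR : t ≤ R ^ 2 / (2 * σ ^ 2) := by
    rw [htdef]; gcongr
  have hfinal : |r| * (R ^ 2 / (2 * σ ^ 2)) ≤ δ := by
    rw [hσ2, mul_div_assoc', div_le_iff₀ (by positivity)]
    have hA : (0:ℝ) ≤ |r| * R ^ 2 := by positivity
    have : δ * (2 * ((|r| * R ^ 2) / (2 * δ) + 1)) = |r| * R ^ 2 + 2 * δ := by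
      field_simp
    rw [this]; linarith
  calc |r * Real.exp (-t) - r| = |r| * (1 - Real.exp (-t)) := by
        rw [show r * Real.exp (-t) - r = -(r * (1 - Real.exp (-t))) by ring,
          abs_neg, abs_mul, abs_of_nonneg (by linarith : (0:ℝ) ≤ 1 - Real.exp (-t))]
    _ ≤ |r| * t := mul_le_mul_of_nonneg_left (by linarith) (abs_nonneg r)
    _ ≤ |r| * (R ^ 2 / (2 * σ ^ 2)) := mul_le_mul_of_nonneg_left htR (abs_nonneg r)
    _ ≤ δ := hfinal


def gaussGens (d : ℕ) (K : Set (EuclideanSpace ℝ (Fin d))) : Set C(K, ℝ) :=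
  {f : C(K, ℝ) | ∃ (μ0 : EuclideanSpace ℝ (Fin d)) (σ0 : ℝ), 0 < σ0 ∧
    f = ContinuousMap.restrict K ⟨fun x => Real.exp (-‖x - μ0‖ ^ 2 / (2 * σ0 ^ 2)), by fun_prop⟩}

lemma adjoin_approx {K : Set E} (hK : IsCompact K) (a : C(K, ℝ))
    (ha : a ∈ Algebra.adjoin ℝ (gaussGens d K)) :
    ∀ δ > 0, ∃ h : E → ℝ, IsCombo h ∧ ∀ x : K, |h (↑x) - a x| ≤ δ := by
  haveI : CompactSpace K := isCompact_iff_compactSpace.mp hK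
  induction ha using Algebra.adjoin_induction with
  | mem f hf =>
    obtain ⟨μ0, σ0, hσ0, rfl⟩ := hf
    intro δ hδ
    exact ⟨fun x => Real.exp (-‖x - μ0‖ ^ 2 / (2 * σ0 ^ 2)), IsCombo.gauss μ0 hσ0,
      fun x => by simp [ContinuousMap.restrict, hδ.le]⟩
  | algebraMap r =>
    intro δ hδ
    obtain ⟨h, hcombo, hbound⟩ := isCombo_const_approx hK.isBounded r hδ
    exact ⟨h, hcombo, fun x => by simpa using hbound x x.2⟩
  | add f g hf hg ihf ihg =>
    intro δ hδ
    obtain ⟨h1, hc1, hb1⟩ := ihf (δ / 2) (by linarith)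
    obtain ⟨h2, hc2, hb2⟩ := ihg (δ / 2) (by linarith)
    refine ⟨fun x => h1 x + h2 x, hc1.add hc2, fun x => ?_⟩
    have := hb1 x; have := hb2 x
    simp only [ContinuousMap.add_apply]
    have : |h1 ↑x + h2 ↑x - (f x + g x)| ≤ |h1 ↑x - f x| + |h2 ↑x - g x| := by
      have := abs_add_le (h1 ↑x - f x) (h2 ↑x - g x)
      rw [show h1 ↑x + h2 ↑x - (f x + g x) = (h1 ↑x - f x) + (h2 ↑x - g x) by ring]; exact this
    linarith [hb1 x, hb2 x]
  | mul f g hf hg ihf ihg =>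
    intro δ hδ
    set Ma := ‖f‖ with hMa
    set Mb := ‖g‖ with hMb
    have hMa0 : 0 ≤ Ma := norm_nonneg _
    have hMb0 : 0 ≤ Mb := norm_nonneg _
    obtain ⟨h1, hc1, hb1⟩ := ihf (min 1 (δ / (2 * (Mb + 1)))) (by positivity)
    obtain ⟨h2, hc2, hb2⟩ := ihg (δ / (2 * (Ma + 1))) (by positivity)
    refine ⟨fun x => h1 x * h2 x, hc1.mul hc2, fun x => ?_⟩
    simp only [ContinuousMap.mul_apply]
    have hfx : |f x| ≤ Ma := ContinuousMap.norm_coe_le_norm f x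
    have hgx : |g x| ≤ Mb := ContinuousMap.norm_coe_le_norm g x
    have e1 := hb1 x
    have e2 := hb2 x
    have h1bd : |h1 ↑x| ≤ Ma + 1 := by
      have : |h1 ↑x| ≤ |f x| + |h1 ↑x - f x| := by
        have := abs_add_le (f x) (h1 ↑x - f x); rw [show |h1 ↑x| = |f x + (h1 ↑x - f x)| by congr 1; ring]; exact this
      have := min_le_left 1 (δ / (2 * (Mb + 1)))
      linarith
    have key : |h1 ↑x * h2 ↑x - f x * g x|
        ≤ |h1 ↑x| * |h2 ↑x - g x| + |h1 ↑x - f x| * |g x| := by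
      have : h1 ↑x * h2 ↑x - f x * g x
          = h1 ↑x * (h2 ↑x - g x) + (h1 ↑x - f x) * g x := by ring
      rw [this]
      exact (abs_add_le _ _).trans (by rw [abs_mul, abs_mul])
    have t1 : |h1 ↑x| * |h2 ↑x - g x| ≤ (Ma + 1) * (δ / (2 * (Ma + 1))) :=
      mul_le_mul h1bd e2 (abs_nonneg _) (by linarith)
    have t2 : |h1 ↑x - f x| * |g x| ≤ (δ / (2 * (Mb + 1))) * Mb := by
      apply mul_le_mul (le_trans e1 (min_le_right _ _)) hgx (abs_nonneg _) (by positivity)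
    have r1 : (Ma + 1) * (δ / (2 * (Ma + 1))) = δ / 2 := by
      field_simp
    have r2 : (δ / (2 * (Mb + 1))) * Mb ≤ δ / 2 := by
      rw [div_mul_eq_mul_div, div_le_div_iff₀ (by positivity) (by positivity)]
      nlinarith
    linarith


lemma gaussGens_separatesPoints (K : Set E) :
    (Algebra.adjoin ℝ (gaussGens d K)).SeparatesPoints := by
  intro x y hxy
  set f : C(K, ℝ) :=
    ContinuousMap.restrict K ⟨fun z => Real.exp (-‖z - (↑x : E)‖ ^ 2 / (2 * (1:ℝ) ^ 2)), by fun_prop⟩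
    with hf
  refine ⟨f, ⟨f, Algebra.subset_adjoin ⟨(↑x : E), 1, one_pos, rfl⟩, rfl⟩, ?_⟩
  have hxval : f x = 1 := by simp [hf, ContinuousMap.restrict]
  have hne : (0:ℝ) < ‖(↑y : E) - ↑x‖ := by
    rw [norm_pos_iff, sub_ne_zero]
    exact fun h => hxy (Subtype.coe_injective h.symm)
  have hyval : f y < 1 := by
    show Real.exp (-‖(↑y : E) - ↑x‖ ^ 2 / (2 * (1:ℝ) ^ 2)) < 1
    rw [Real.exp_lt_one_iff]
    have : 0 < ‖(↑y : E) - ↑x‖ ^ 2 := by positivity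
    rw [one_pow, mul_one]
    nlinarith
  rw [hxval]
  exact (ne_of_lt hyval).symm


end GaussAux

theorem gaussian_primitives_dense_L2
    (d : ℕ) (Ω : Set (EuclideanSpace ℝ (Fin d)))
    (hΩopen : IsOpen Ω) (hΩbdd : Bornology.IsBounded Ω)
    (hΩpos : 0 < volume Ω) :
    Dense {F : Lp ℝ 2 (volume.restrict Ω) |
      ∃ (K : ℕ) (c : Fin K → ℝ) (μ : Fin K → EuclideanSpace ℝ (Fin d))
        (σ : Fin K → ℝ), (∀ k, 0 < σ k) ∧
        ⇑F =ᵐ[volume.restrict Ω]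
          fun x => ∑ k, c k * Real.exp (-‖x - μ k‖ ^ 2 / (2 * σ k ^ 2))} := by
  classical
  have hΩfin : volume Ω ≠ ⊤ := hΩbdd.measure_lt_top.ne
  haveI : IsFiniteMeasure (volume.restrict Ω) :=
    ⟨by rw [Measure.restrict_apply_univ]; exact hΩbdd.measure_lt_top⟩
  haveI : (volume.restrict Ω).WeaklyRegular :=
    Measure.WeaklyRegular.restrict_of_measure_ne_top hΩfin
  set S := {F : Lp ℝ 2 (volume.restrict Ω) |
      ∃ (K : ℕ) (c : Fin K → ℝ) (μ : Fin K → EuclideanSpace ℝ (Fin d))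
        (σ : Fin K → ℝ), (∀ k, 0 < σ k) ∧
        ⇑F =ᵐ[volume.restrict Ω]
          fun x => ∑ k, c k * Real.exp (-‖x - μ k‖ ^ 2 / (2 * σ k ^ 2))} with hSdef
  have key : ∀ g : BoundedContinuousFunction (EuclideanSpace ℝ (Fin d)) ℝ,
      (BoundedContinuousFunction.toLp 2 (volume.restrict Ω) ℝ g) ∈ closure S := by
    intro g
    rw [Metric.mem_closure_iff]
    intro ε hε
    -- compact closure
    have hKc : IsCompact (closure Ω) := hΩbdd.isCompact_closure
    haveI : CompactSpace (closure Ω) := isCompact_iff_compactSpace.mp hKc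
    -- choose δ
    set Vh : ℝ := ((volume Ω) ^ (((2:ENNReal).toReal)⁻¹)).toReal with hVh
    have hVh0 : 0 ≤ Vh := ENNReal.toReal_nonneg
    set δ : ℝ := ε / (8 * (Vh + 1)) with hδdef
    have hδ : 0 < δ := by positivity
    -- Stone-Weierstrass
    obtain ⟨⟨a, haA⟩, hanear⟩ :=
      ContinuousMap.exists_mem_subalgebra_near_continuous_of_separatesPoints
        (Algebra.adjoin ℝ (gaussGens d (closure Ω))) (gaussGens_separatesPoints _)
        (fun z : closure Ω => g ↑z) (by fun_prop) δ hδ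
    obtain ⟨h, hcombo, hnear⟩ := adjoin_approx hKc a haA δ hδ
    have hclose : ∀ x ∈ closure Ω, |h x - g x| ≤ 2 * δ := by
      intro x hx
      have h1 := hnear ⟨x, hx⟩
      have h2 := hanear ⟨x, hx⟩
      rw [Real.norm_eq_abs] at h2
      calc |h x - g x| = |(h x - a ⟨x, hx⟩) + (a ⟨x, hx⟩ - g x)| := by ring_nf
        _ ≤ |h x - a ⟨x, hx⟩| + |a ⟨x, hx⟩ - g x| := abs_add_le _ _
        _ ≤ 2 * δ := by linarith
    -- the combo as a bounded continuous function
    obtain ⟨M, hM⟩ := hcombo.bound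
    set hb : BoundedContinuousFunction (EuclideanSpace ℝ (Fin d)) ℝ :=
      BoundedContinuousFunction.ofNormedAddCommGroup h hcombo.continuous M
        (fun x => by rw [Real.norm_eq_abs]; exact hM x) with hhb
    refine ⟨BoundedContinuousFunction.toLp 2 (volume.restrict Ω) ℝ hb, ?_, ?_⟩
    · -- membership in S
      obtain ⟨K, c, μg, σg, hσ, hfeq⟩ := hcombo
      refine ⟨K, c, μg, σg, hσ, ?_⟩
      refine (BoundedContinuousFunction.coeFn_toLp 2 (volume.restrict Ω) ℝ hb).trans ?_
      rw [← hfeq]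
      rfl
    · -- distance estimate
      rw [dist_eq_norm, ← map_sub]
      have hcoe := BoundedContinuousFunction.coeFn_toLp 2 (volume.restrict Ω) ℝ (g - hb)
      rw [MeasureTheory.Lp.norm_def, eLpNorm_congr_ae hcoe]
      have hbound : ∀ᵐ x ∂(volume.restrict Ω), ‖(g - hb) x‖ ≤ 2 * δ := by
        filter_upwards [ae_restrict_mem hΩopen.measurableSet] with x hx
        rw [BoundedContinuousFunction.sub_apply, Real.norm_eq_abs, abs_sub_comm]
        exact hclose x (subset_closure hx)
      have hle := eLpNorm_le_of_ae_bound (p := 2) hbound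
      rw [Measure.restrict_apply_univ] at hle
      have hRHSne : (volume Ω) ^ (((2:ENNReal).toReal)⁻¹) * ENNReal.ofReal (2 * δ) ≠ ⊤ := by
        apply ENNReal.mul_ne_top _ ENNReal.ofReal_ne_top
        exact (ENNReal.rpow_lt_top_of_nonneg (by norm_num) hΩfin).ne
      have hto := ENNReal.toReal_mono hRHSne hle
      rw [ENNReal.toReal_mul, ENNReal.toReal_ofReal (by positivity)] at hto
      have : Vh * (2 * δ) < ε := by
        have h1 : Vh * (2 * δ) ≤ (Vh + 1) * (2 * δ) := by nlinarith
        have h2 : (Vh + 1) * (2 * δ) = ε / 4 := by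
          rw [hδdef]; field_simp; ring
        linarith
      calc (eLpNorm (⇑(g - hb)) 2 (volume.restrict Ω)).toReal
          ≤ Vh * (2 * δ) := hto
        _ < ε := this
  rw [dense_iff_closure_eq]
  refine Set.eq_univ_of_univ_subset ?_
  have hdense := BoundedContinuousFunction.toLp_denseRange ℝ (volume.restrict Ω) ℝ
    (by norm_num : (2:ENNReal) ≠ ⊤)
  calc Set.univ
      = closure (Set.range (BoundedContinuousFunction.toLp 2 (volume.restrict Ω) ℝ)) :=
        hdense.closure_range.symm
    _ ⊆ closure (closure S) := closure_mono (Set.range_subset_iff.mpr key)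
    _ = closure S := closure_closure
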